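/- Let L = p^{-1}Z_p ⊕ Z_p ⊕ Z_p ⊕ Z_p with the standard symplectic pairing, and let I be a totally isotropic direct summand of rank 2 of L. Then there exist a primitive element x ∈ I of type (I) and a primitive element y ∈ I of type (II), and any such pair x, y forms a Z_p-basis of I. -/

import Mathlib

/-- The paramodular lattice `L = p⁻¹ℤ_p ⊕ ℤ_p ⊕ ℤ_p ⊕ ℤ_p ⊆ ℚ_p⁴` is identified with `ℤ_p⁴`
via `(a,b,c,d) ↦ (p⁻¹a, b, c, d)`.  Under this identification the standard symplectic pairing
`⟨x,y⟩ = x₁y₄ + x₂y₃ − x₃y₂ − x₄y₁` becomes the following `ℚ_p`-valued pairing on `ℤ_p⁴`. -/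
noncomputable def spPara (p : ℕ) [Fact p.Prime] (u v : Fin 4 → ℤ_[p]) : ℚ_[p] :=
  ((u 0 * v 3 : ℤ_[p]) : ℚ_[p]) / (p : ℚ_[p]) + ((u 1 * v 2 : ℤ_[p]) : ℚ_[p])
    - ((u 2 * v 1 : ℤ_[p]) : ℚ_[p]) - ((u 3 * v 0 : ℤ_[p]) : ℚ_[p]) / (p : ℚ_[p])

/-- `x ∈ L` is primitive if `x ∉ pL`. -/
def ParaPrimitive (p : ℕ) [Fact p.Prime] (x : Fin 4 → ℤ_[p]) : Prop :=
  ¬ ∀ i, (p : ℤ_[p]) ∣ x i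

/-- A primitive element of type (I): `⟨x,y⟩ ∈ p⁻¹ℤ_p ∖ ℤ_p` for some `y ∈ L`. -/
def PrimTypeI (p : ℕ) [Fact p.Prime] (x : Fin 4 → ℤ_[p]) : Prop :=
  ParaPrimitive p x ∧ ∃ y : Fin 4 → ℤ_[p], ¬ ‖spPara p x y‖ ≤ 1

/-- A primitive element of type (II): `⟨x,y⟩ ∈ ℤ_p` for every `y ∈ L`. -/
def PrimTypeII (p : ℕ) [Fact p.Prime] (x : Fin 4 → ℤ_[p]) : Prop :=
  ParaPrimitive p x ∧ ∀ y : Fin 4 → ℤ_[p], ‖spPara p x y‖ ≤ 1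


section Helpers

variable {p : ℕ} [Fact p.Prime]

lemma div_norm_le_one_iff (c : ℤ_[p]) :
    ‖(c : ℚ_[p]) / (p : ℚ_[p])‖ ≤ 1 ↔ (p : ℤ_[p]) ∣ c := by
  have hp : (0:ℝ) < p := by exact_mod_cast (Fact.out : p.Prime).pos
  rw [norm_div, Padic.norm_p, PadicInt.padic_norm_e_of_padicInt,
    div_le_one (by positivity),
    show ((p:ℝ)⁻¹) = (p:ℝ) ^ (-(1:ℕ) : ℤ) by simp,
    PadicInt.norm_le_pow_iff_mem_span_pow, pow_one, Ideal.mem_span_singleton]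

lemma spPara_eq (u v : Fin 4 → ℤ_[p]) :
    spPara p u v = ((u 0 * v 3 - u 3 * v 0 : ℤ_[p]) : ℚ_[p]) / (p : ℚ_[p])
      + ((u 1 * v 2 - u 2 * v 1 : ℤ_[p]) : ℚ_[p]) := by
  unfold spPara; push_cast; ring

lemma norm_spPara_le_one_iff (u v : Fin 4 → ℤ_[p]) :
    ‖spPara p u v‖ ≤ 1 ↔ (p : ℤ_[p]) ∣ (u 0 * v 3 - u 3 * v 0) := by
  rw [spPara_eq, ← div_norm_le_one_iff]
  set A := ((u 0 * v 3 - u 3 * v 0 : ℤ_[p]) : ℚ_[p]) / (p : ℚ_[p]) with hA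
  set d := ((u 1 * v 2 - u 2 * v 1 : ℤ_[p]) : ℚ_[p]) with hdd
  have hd : ‖d‖ ≤ 1 := by
    rw [hdd, PadicInt.padic_norm_e_of_padicInt]; exact PadicInt.norm_le_one _
  constructor
  · intro h
    have h2 : ‖A + d + -d‖ ≤ ‖A + d‖ ⊔ ‖-d‖ := Padic.nonarchimedean _ _
    simpa using h2.trans (max_le h (by simpa using hd))
  · intro h
    exact (Padic.nonarchimedean A d).trans (max_le h hd)

lemma spPara_zero_key {u v : Fin 4 → ℤ_[p]} (h : spPara p u v = 0) :
    u 0 * v 3 - u 3 * v 0 = (p : ℤ_[p]) * (u 2 * v 1 - u 1 * v 2) := by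
  have hp : ((p : ℕ) : ℚ_[p]) ≠ 0 := by
    exact_mod_cast (Fact.out : p.Prime).ne_zero
  rw [spPara_eq] at h
  push_cast at h
  field_simp at h
  apply Subtype.coe_injective
  push_cast
  linear_combination h

lemma isUnit_of_not_dvd' {z : ℤ_[p]} (h : ¬ (p : ℤ_[p]) ∣ z) : IsUnit z := by
  rw [PadicInt.isUnit_iff]
  rcases lt_or_eq_of_le (PadicInt.norm_le_one z) with h1 | h1
  · exact absurd ((PadicInt.norm_lt_one_iff_dvd z).mp h1) h
  · exact h1

lemma primTypeI_iff (x : Fin 4 → ℤ_[p]) :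
    PrimTypeI p x ↔ ParaPrimitive p x ∧ ¬((p:ℤ_[p]) ∣ x 0 ∧ (p:ℤ_[p]) ∣ x 3) := by
  constructor
  · rintro ⟨hpr, y, hy⟩
    refine ⟨hpr, fun ⟨h0, h3⟩ => hy ?_⟩
    rw [norm_spPara_le_one_iff]
    exact dvd_sub (h0.mul_right _) (h3.mul_right _)
  · rintro ⟨hpr, h⟩
    refine ⟨hpr, ?_⟩
    by_cases h0 : (p:ℤ_[p]) ∣ x 0
    · have h3 : ¬ (p:ℤ_[p]) ∣ x 3 := fun h3 => h ⟨h0, h3⟩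
      refine ⟨![1, 0, 0, 0], ?_⟩
      rw [norm_spPara_le_one_iff]
      simpa using h3
    · refine ⟨![0, 0, 0, 1], ?_⟩
      rw [norm_spPara_le_one_iff]
      simpa using h0

lemma primTypeII_iff (x : Fin 4 → ℤ_[p]) :
    PrimTypeII p x ↔ ParaPrimitive p x ∧ ((p:ℤ_[p]) ∣ x 0 ∧ (p:ℤ_[p]) ∣ x 3) := by
  constructor
  · rintro ⟨hpr, hall⟩
    refine ⟨hpr, ?_, ?_⟩
    · have := (norm_spPara_le_one_iff x ![0,0,0,1]).mp (hall _)
      simpa using this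
    · have := (norm_spPara_le_one_iff x ![1,0,0,0]).mp (hall _)
      simpa using this
  · rintro ⟨hpr, h0, h3⟩
    refine ⟨hpr, fun y => ?_⟩
    rw [norm_spPara_le_one_iff]
    exact dvd_sub (h0.mul_right _) (h3.mul_right _)

end Helpers

set_option maxHeartbeats 1600000 in
/-- Let `I` be a totally isotropic direct summand of rank 2 of the paramodular lattice `L`.
Then `I` contains a primitive element of type (I) and a primitive element of type (II),
and any such pair forms a `ℤ_p`-basis of `I`. -/
theorem isotropic_summand_basis_typeI_typeII
    (p : ℕ) [Fact p.Prime]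
    (I : Submodule ℤ_[p] (Fin 4 → ℤ_[p]))
    (hiso : ∀ u ∈ I, ∀ v ∈ I, spPara p u v = 0)
    (hsummand : ∃ J : Submodule ℤ_[p] (Fin 4 → ℤ_[p]), IsCompl I J)
    (brank : Module.Basis (Fin 2) ℤ_[p] I) :
    (∃ x ∈ I, PrimTypeI p x) ∧ (∃ y ∈ I, PrimTypeII p y) ∧
    (∀ x y : Fin 4 → ℤ_[p], x ∈ I → y ∈ I → PrimTypeI p x → PrimTypeII p y →
      ∃ B : Module.Basis (Fin 2) ℤ_[p] I,
        (B 0 : Fin 4 → ℤ_[p]) = x ∧ (B 1 : Fin 4 → ℤ_[p]) = y) := by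
  classical
  obtain ⟨J, hJ⟩ := hsummand
  set u : Fin 4 → ℤ_[p] := (brank 0 : Fin 4 → ℤ_[p]) with hu_def
  set v : Fin 4 → ℤ_[p] := (brank 1 : Fin 4 → ℤ_[p]) with hv_def
  have humem : u ∈ I := (brank 0).2
  have hvmem : v ∈ I := (brank 1).2
  have hpne : (p : ℤ_[p]) ≠ 0 := Nat.cast_ne_zero.mpr (Fact.out : p.Prime).ne_zero
  have hp1 : ¬ (p : ℤ_[p]) ∣ 1 := fun h => PadicInt.prime_p.not_unit (isUnit_of_dvd_one h)
  -- key lemma: coefficients of an element of pL ∩ I are divisible by p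
  have keyA : ∀ a b : ℤ_[p], (∀ i, (p:ℤ_[p]) ∣ (a • u + b • v) i) →
      (p:ℤ_[p]) ∣ a ∧ (p:ℤ_[p]) ∣ b := by
    intro a b hdvd
    choose z hz using fun i => hdvd i
    have hw : a • u + b • v = (p:ℤ_[p]) • z := by
      funext i
      rw [Pi.smul_apply, smul_eq_mul]
      exact hz i
    set π := I.projectionOnto J hJ with hπ_def
    set W : I := a • brank 0 + b • brank 1 with hW_def
    have hWcoe : (W : Fin 4 → ℤ_[p]) = a • u + b • v := by
      rw [hW_def, Submodule.coe_add, SetLike.val_smul, SetLike.val_smul, hu_def, hv_def]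
    have hπW : π (W : Fin 4 → ℤ_[p]) = W := Submodule.projectionOnto_apply_left hJ W
    have hWp : W = (p:ℤ_[p]) • π z := by
      rw [← hπW, hWcoe, hw, map_smul]
    have hrW0 : brank.repr W 0 = a := by
      rw [hW_def, map_add, map_smul, map_smul, Module.Basis.repr_self, Module.Basis.repr_self]
      simp
    have hrW1 : brank.repr W 1 = b := by
      rw [hW_def, map_add, map_smul, map_smul, Module.Basis.repr_self, Module.Basis.repr_self]
      simp
    constructor
    · refine ⟨brank.repr (π z) 0, ?_⟩
      rw [← hrW0, hWp, map_smul]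
      simp
    · refine ⟨brank.repr (π z) 1, ?_⟩
      rw [← hrW1, hWp, map_smul]
      simp
  have primu : ParaPrimitive p u := fun hall =>
    hp1 (keyA 1 0 (fun i => by simpa using hall i)).1
  have primv : ParaPrimitive p v := fun hall =>
    hp1 (keyA 0 1 (fun i => by simpa using hall i)).2
  have hK : u 0 * v 3 - u 3 * v 0 = (p:ℤ_[p]) * (u 2 * v 1 - u 1 * v 2) :=
    spPara_zero_key (hiso u humem v hvmem)
  have hKd : (p:ℤ_[p]) ∣ (u 0 * v 3 - u 3 * v 0) := ⟨_, hK⟩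
  have comp : ∀ (s t : ℤ_[p]) (w w' : Fin 4 → ℤ_[p]) (i : Fin 4),
      (s • w + t • w') i = s * w i + t * w' i := by
    intro s t w w' i
    simp
  have part1 : ∃ x ∈ I, PrimTypeI p x := by
    by_cases hu : (p:ℤ_[p]) ∣ u 0 ∧ (p:ℤ_[p]) ∣ u 3
    · by_cases hv : (p:ℤ_[p]) ∣ v 0 ∧ (p:ℤ_[p]) ∣ v 3
      · exfalso
        obtain ⟨a0, ha0⟩ := hu.1
        obtain ⟨a3, ha3⟩ := hu.2
        have hmid : (p:ℤ_[p]) ∣ (u 2 * v 1 - u 1 * v 2) := by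
          have h2 : (p:ℤ_[p]) * (u 2 * v 1 - u 1 * v 2)
              = (p:ℤ_[p]) * (a0 * v 3 - a3 * v 0) := by
            rw [← hK, ha0, ha3]; ring
          rw [mul_left_cancel₀ hpne h2]
          exact dvd_sub (hv.2.mul_left _) (hv.1.mul_left _)
        have hc1 : ∀ i, (p:ℤ_[p]) ∣ ((v 1) • u + (-(u 1)) • v) i := by
          intro i
          fin_cases i
          · show (p:ℤ_[p]) ∣ ((v 1) • u + (-(u 1)) • v) 0
            rw [comp, show v 1 * u 0 + -(u 1) * v 0 = v 1 * u 0 - u 1 * v 0 by ring]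
            exact dvd_sub (hu.1.mul_left _) (hv.1.mul_left _)
          · show (p:ℤ_[p]) ∣ ((v 1) • u + (-(u 1)) • v) 1
            rw [comp, show v 1 * u 1 + -(u 1) * v 1 = 0 by ring]
            exact dvd_zero _
          · show (p:ℤ_[p]) ∣ ((v 1) • u + (-(u 1)) • v) 2
            rw [comp, show v 1 * u 2 + -(u 1) * v 2 = u 2 * v 1 - u 1 * v 2 by ring]
            exact hmid
          · show (p:ℤ_[p]) ∣ ((v 1) • u + (-(u 1)) • v) 3
            rw [comp, show v 1 * u 3 + -(u 1) * v 3 = v 1 * u 3 - u 1 * v 3 by ring]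
            exact dvd_sub (hu.2.mul_left _) (hv.2.mul_left _)
        have hc2 : ∀ i, (p:ℤ_[p]) ∣ ((v 2) • u + (-(u 2)) • v) i := by
          intro i
          fin_cases i
          · show (p:ℤ_[p]) ∣ ((v 2) • u + (-(u 2)) • v) 0
            rw [comp, show v 2 * u 0 + -(u 2) * v 0 = v 2 * u 0 - u 2 * v 0 by ring]
            exact dvd_sub (hu.1.mul_left _) (hv.1.mul_left _)
          · show (p:ℤ_[p]) ∣ ((v 2) • u + (-(u 2)) • v) 1
            rw [comp, show v 2 * u 1 + -(u 2) * v 1 = -(u 2 * v 1 - u 1 * v 2) by ring]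
            exact dvd_neg.mpr hmid
          · show (p:ℤ_[p]) ∣ ((v 2) • u + (-(u 2)) • v) 2
            rw [comp, show v 2 * u 2 + -(u 2) * v 2 = 0 by ring]
            exact dvd_zero _
          · show (p:ℤ_[p]) ∣ ((v 2) • u + (-(u 2)) • v) 3
            rw [comp, show v 2 * u 3 + -(u 2) * v 3 = v 2 * u 3 - u 2 * v 3 by ring]
            exact dvd_sub (hu.2.mul_left _) (hv.2.mul_left _)
        have h1 := keyA _ _ hc1
        have h2 := keyA _ _ hc2
        refine primu ?_
        intro i
        fin_cases i
        · exact hu.1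
        · show (p:ℤ_[p]) ∣ u 1
          exact dvd_neg.mp h1.2
        · show (p:ℤ_[p]) ∣ u 2
          exact dvd_neg.mp h2.2
        · exact hu.2
      · exact ⟨v, hvmem, (primTypeI_iff v).mpr ⟨primv, hv⟩⟩
    · exact ⟨u, humem, (primTypeI_iff u).mpr ⟨primu, hu⟩⟩
  have part2 : ∃ y ∈ I, PrimTypeII p y := by
    by_cases hu : (p:ℤ_[p]) ∣ u 0 ∧ (p:ℤ_[p]) ∣ u 3
    · exact ⟨u, humem, (primTypeII_iff u).mpr ⟨primu, hu⟩⟩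
    · by_cases hu0 : (p:ℤ_[p]) ∣ u 0
      · have hu3 : ¬ (p:ℤ_[p]) ∣ u 3 := fun h => hu ⟨hu0, h⟩
        refine ⟨(-(v 3)) • u + (u 3) • v,
          I.add_mem (I.smul_mem _ humem) (I.smul_mem _ hvmem), ?_⟩
        rw [primTypeII_iff]
        refine ⟨fun hall => hu3 (keyA _ _ hall).2, ?_, ?_⟩
        · rw [comp, show -(v 3) * u 0 + u 3 * v 0 = -(u 0 * v 3 - u 3 * v 0) by ring]
          exact dvd_neg.mpr hKd
        · rw [comp, show -(v 3) * u 3 + u 3 * v 3 = 0 by ring]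
          exact dvd_zero _
      · refine ⟨(-(v 0)) • u + (u 0) • v,
          I.add_mem (I.smul_mem _ humem) (I.smul_mem _ hvmem), ?_⟩
        rw [primTypeII_iff]
        refine ⟨fun hall => hu0 (keyA _ _ hall).2, ?_, ?_⟩
        · rw [comp, show -(v 0) * u 0 + u 0 * v 0 = 0 by ring]
          exact dvd_zero _
        · rw [comp, show -(v 0) * u 3 + u 0 * v 3 = u 0 * v 3 - u 3 * v 0 by ring]
          exact hKd
  refine ⟨part1, part2, ?_⟩
  intro x y hx hy hX hY
  obtain ⟨hXp, hXd⟩ := (primTypeI_iff x).mp hX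
  obtain ⟨hYp, hYd⟩ := (primTypeII_iff y).mp hY
  set a := brank.repr ⟨x, hx⟩ 0 with ha_def
  set b := brank.repr ⟨x, hx⟩ 1 with hb_def
  set c := brank.repr ⟨y, hy⟩ 0 with hc_def
  set d := brank.repr ⟨y, hy⟩ 1 with hd_def
  have hxe : a • u + b • v = x := by
    have h := brank.sum_repr ⟨x, hx⟩
    rw [Fin.sum_univ_two] at h
    have h2 := congrArg (fun t : I => (t : Fin 4 → ℤ_[p])) h
    simp only [Submodule.coe_add, SetLike.val_smul] at h2
    exact h2
  have hye : c • u + d • v = y := by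
    have h := brank.sum_repr ⟨y, hy⟩
    rw [Fin.sum_univ_two] at h
    have h2 := congrArg (fun t : I => (t : Fin 4 → ℤ_[p])) h
    simp only [Submodule.coe_add, SetLike.val_smul] at h2
    exact h2
  have hdet : ¬ (p:ℤ_[p]) ∣ (a * d - c * b) := by
    intro hD
    by_cases hc : (p:ℤ_[p]) ∣ c
    · by_cases hdd : (p:ℤ_[p]) ∣ d
      · refine hYp ?_
        intro i
        rw [← hye, comp]
        exact dvd_add (hc.mul_right _) (hdd.mul_right _)
      · have hD' : (p:ℤ_[p]) ∣ (d * a - b * c) := by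
          have := hD; rwa [show a * d - c * b = d * a - b * c by ring] at this
        have key : ∀ i, d * x i = b * y i + (d * a - b * c) * u i := by
          intro i
          rw [← hxe, ← hye, comp, comp]
          ring
        have px0 : (p:ℤ_[p]) ∣ x 0 := by
          have hdx : (p:ℤ_[p]) ∣ d * x 0 := by
            rw [key 0]; exact dvd_add (hYd.1.mul_left _) (hD'.mul_right _)
          exact (PadicInt.prime_p.dvd_mul.mp hdx).resolve_left hdd
        have px3 : (p:ℤ_[p]) ∣ x 3 := by
          have hdx : (p:ℤ_[p]) ∣ d * x 3 := by
            rw [key 3]; exact dvd_add (hYd.2.mul_left _) (hD'.mul_right _)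
          exact (PadicInt.prime_p.dvd_mul.mp hdx).resolve_left hdd
        exact hXd ⟨px0, px3⟩
    · have hD' : (p:ℤ_[p]) ∣ (c * b - a * d) := by
        have := dvd_neg.mpr hD
        rwa [show -(a * d - c * b) = c * b - a * d by ring] at this
      have key : ∀ i, c * x i = a * y i + (c * b - a * d) * v i := by
        intro i
        rw [← hxe, ← hye, comp, comp]
        ring
      have px0 : (p:ℤ_[p]) ∣ x 0 := by
        have hdx : (p:ℤ_[p]) ∣ c * x 0 := by
          rw [key 0]; exact dvd_add (hYd.1.mul_left _) (hD'.mul_right _)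
        exact (PadicInt.prime_p.dvd_mul.mp hdx).resolve_left hc
      have px3 : (p:ℤ_[p]) ∣ x 3 := by
        have hdx : (p:ℤ_[p]) ∣ c * x 3 := by
          rw [key 3]; exact dvd_add (hYd.2.mul_left _) (hD'.mul_right _)
        exact (PadicInt.prime_p.dvd_mul.mp hdx).resolve_left hc
      exact hXd ⟨px0, px3⟩
  have hdetu : IsUnit
      ((LinearMap.toMatrix brank brank (brank.constr ℤ_[p] ![⟨x, hx⟩, ⟨y, hy⟩])).det) := by
    rw [Matrix.det_fin_two]
    have h00 : LinearMap.toMatrix brank brank (brank.constr ℤ_[p] ![⟨x, hx⟩, ⟨y, hy⟩]) 0 0 = a := by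
      rw [LinearMap.toMatrix_apply, Module.Basis.constr_basis]
      simp only [Matrix.cons_val_zero]; rfl
    have h10 : LinearMap.toMatrix brank brank (brank.constr ℤ_[p] ![⟨x, hx⟩, ⟨y, hy⟩]) 1 0 = b := by
      rw [LinearMap.toMatrix_apply, Module.Basis.constr_basis]
      simp only [Matrix.cons_val_zero]; rfl
    have h01 : LinearMap.toMatrix brank brank (brank.constr ℤ_[p] ![⟨x, hx⟩, ⟨y, hy⟩]) 0 1 = c := by
      rw [LinearMap.toMatrix_apply, Module.Basis.constr_basis]
      simp only [Matrix.cons_val_one, Matrix.head_cons, Matrix.cons_val_zero]; rfl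
    have h11 : LinearMap.toMatrix brank brank (brank.constr ℤ_[p] ![⟨x, hx⟩, ⟨y, hy⟩]) 1 1 = d := by
      rw [LinearMap.toMatrix_apply, Module.Basis.constr_basis]
      simp only [Matrix.cons_val_one, Matrix.head_cons, Matrix.cons_val_zero]; rfl
    rw [h00, h11, h01, h10]
    exact isUnit_of_not_dvd' hdet
  refine ⟨brank.map (LinearEquiv.ofIsUnitDet hdetu), ?_, ?_⟩
  · rw [Module.Basis.map_apply]
    have e : (LinearEquiv.ofIsUnitDet hdetu) (brank 0) = ⟨x, hx⟩ := by
      rw [LinearEquiv.ofIsUnitDet_apply, Module.Basis.constr_basis]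
      simp only [Matrix.cons_val_zero]
    rw [e]
  · rw [Module.Basis.map_apply]
    have e : (LinearEquiv.ofIsUnitDet hdetu) (brank 1) = ⟨y, hy⟩ := by
      rw [LinearEquiv.ofIsUnitDet_apply, Module.Basis.constr_basis]
      simp only [Matrix.cons_val_one, Matrix.head_cons, Matrix.cons_val_zero]
    rw [e]
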